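/- Let C (control) and T (target) be data qubits and A an ancilla prepared in |+⟩. Performing a Z⊗Z parity measurement on (C,A), then an X⊗X parity measurement on (A,T), then measuring A in the Z basis, and applying the appropriate Pauli corrections conditioned on the three measurement outcomes, implements the CNOT gate from C to T. In particular, for each triple of outcomes the resulting map on (C,T) is a nonzero scalar multiple of a Pauli correction times CNOT. -/
import Mathlib


open Matrix Kronecker

noncomputable section

abbrev Q := Fin 2
abbrev MQ := Matrix Q Q ℂ

/-- Pauli X matrix. -/
def PX : MQ := !![0, 1; 1, 0]
/-- Pauli Z matrix. -/
def PZ : MQ := !![1, 0; 0, -1]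
/-- Hadamard matrix. -/
def Had : MQ := (((Real.sqrt 2 : ℝ) : ℂ))⁻¹ • !![1, 1; 1, -1]

def ket0 : Q → ℂ := ![1, 0]
def ket1 : Q → ℂ := ![0, 1]
/-- |+⟩ = (|0⟩+|1⟩)/√2 -/
def ketP : Q → ℂ := (((Real.sqrt 2 : ℝ) : ℂ))⁻¹ • ![1, 1]

/-- Tensor product of two single-qubit states. -/
def tp2 (u v : Q → ℂ) : Q × Q → ℂ := fun p => u p.1 * v p.2
/-- Tensor product of three single-qubit states, grouped ((1,2),3). -/
def tp3 (u v w : Q → ℂ) : (Q × Q) × Q → ℂ := fun p => u p.1.1 * v p.1.2 * w p.2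

/-- Standard CNOT, first factor control, second target. -/
def CNOT2 : Matrix (Q × Q) (Q × Q) ℂ :=
  Matrix.of fun p q => if p.1 = q.1 ∧ p.2 = q.2 + q.1 then 1 else 0

/-- Single-qubit Pauli corrections: I, X, Z, XZ. -/
def IsPauli (P : MQ) : Prop := P = 1 ∨ P = PX ∨ P = PZ ∨ P = PX * PZ

/-- Z-copy spider (green) as a 4×2 matrix. -/
def dZm : Matrix (Q × Q) Q ℂ := Matrix.of fun p b => if p.1 = b ∧ p.2 = b then 1 else 0
/-- Z-merge spider (green) as a 2×4 matrix. -/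
def mZm : Matrix Q (Q × Q) ℂ := Matrix.of fun b p => if p.1 = b ∧ p.2 = b then 1 else 0
/-- X-copy spider (red): δ_X|±⟩=|±±⟩. -/
def dXm : Matrix (Q × Q) Q ℂ :=
  Matrix.of fun p b => if p.1 + p.2 = b then (((Real.sqrt 2 : ℝ) : ℂ))⁻¹ else 0
/-- X-merge spider (red): μ_X|±±⟩=|±⟩. -/
def mXm : Matrix Q (Q × Q) ℂ :=
  Matrix.of fun b p => if p.1 + p.2 = b then (((Real.sqrt 2 : ℝ) : ℂ))⁻¹ else 0
/-- Swap of the middle two wires of four, grouped ((1,2),(3,4)). -/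
def Smid : Matrix ((Q × Q) × (Q × Q)) ((Q × Q) × (Q × Q)) ℂ :=
  Matrix.of fun p q =>
    if p.1.1 = q.1.1 ∧ p.1.2 = q.2.1 ∧ p.2.1 = q.1.2 ∧ p.2.2 = q.2.2 then 1 else 0

/-- ZZ-parity projector with sign s on wires (C,A) of (C,A,T). -/
def PZZCA (s : ℂ) : Matrix ((Q × Q) × Q) ((Q × Q) × Q) ℂ :=
  (2:ℂ)⁻¹ • (1 + s • ((PZ ⊗ₖ PZ) ⊗ₖ (1 : MQ)))
/-- XX-parity projector with sign s on wires (A,T) of (C,A,T). -/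
def PXXAT (s : ℂ) : Matrix ((Q × Q) × Q) ((Q × Q) × Q) ℂ :=
  (2:ℂ)⁻¹ • (1 + s • (((1 : MQ) ⊗ₖ PX) ⊗ₖ PX))

/-- The lattice-surgery CNOT of Horsman et al.: for every outcome triple
(s₁, s₂, b), the composite ⟨b|_A ∘ P_XX(s₂)_{A,T} ∘ P_ZZ(s₁)_{C,A} on inputs
ψ_C ⊗ |+⟩_A ⊗ φ_T is a nonzero scalar multiple of a Pauli correction times
CNOT from C to T. -/

lemma kron3_tp3 (A B C : MQ) (u v w : Q → ℂ) :
    ((A ⊗ₖ B) ⊗ₖ C).mulVec (tp3 u v w) = tp3 (A.mulVec u) (B.mulVec v) (C.mulVec w) := by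
  funext p
  simp [Matrix.mulVec, dotProduct, tp3, Fintype.sum_prod_type, Fin.sum_univ_two]
  ring

lemma kron2_tp2 (A B : MQ) (u v : Q → ℂ) :
    (A ⊗ₖ B).mulVec (tp2 u v) = tp2 (A.mulVec u) (B.mulVec v) := by
  funext p
  simp [Matrix.mulVec, dotProduct, tp2, Fintype.sum_prod_type, Fin.sum_univ_two]
  ring

/-- The common nonzero scalar 1/(2√2). -/
def c0 : ℂ := (2:ℂ)⁻¹ * (((Real.sqrt 2 : ℝ) : ℂ))⁻¹

lemma hc0 : c0 ≠ 0 := by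
  have h2 : Real.sqrt 2 ≠ 0 := ne_of_gt (Real.sqrt_pos.mpr (by norm_num))
  exact mul_ne_zero (by norm_num) (inv_ne_zero (Complex.ofReal_ne_zero.mpr h2))

set_option maxHeartbeats 3200000 in
theorem stmt2 :
    ∀ s1 s2 : ℂ, (s1 = 1 ∨ s1 = -1) → (s2 = 1 ∨ s2 = -1) → ∀ b : Q,
      ∃ c : ℂ, c ≠ 0 ∧ ∃ P T : MQ, IsPauli P ∧ IsPauli T ∧
        ∀ ψ φ : Q → ℂ,
          (fun p : Q × Q => ((PXXAT s2 * PZZCA s1).mulVec (tp3 ψ ketP φ)) ((p.1, b), p.2))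
          = c • (((P ⊗ₖ T) * CNOT2).mulVec (tp2 ψ φ)) := by
  rintro s1 s2 (rfl | rfl) (rfl | rfl) b <;> fin_cases b
  · refine ⟨c0, hc0, (1:MQ), (1:MQ), Or.inl rfl, Or.inl rfl, ?_⟩
    intro ψ φ
    funext p
    obtain ⟨i, j⟩ := p
    rw [← Matrix.mulVec_mulVec, ← Matrix.mulVec_mulVec]
    simp only [PZZCA, PXXAT, Matrix.smul_mulVec, Matrix.add_mulVec, Matrix.one_mulVec,
      Matrix.mulVec_add, Matrix.mulVec_smul, one_smul, kron3_tp3, kron2_tp2]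
    fin_cases i <;> fin_cases j <;>
      simp [c0, tp3, tp2, ketP, PZ, PX, CNOT2, Matrix.mulVec, dotProduct,
        Fintype.sum_prod_type, Fin.sum_univ_two, Prod.ext_iff, Fin.ext_iff,
        Matrix.mul_apply, Matrix.one_apply] <;> ring
  · refine ⟨c0, hc0, (1:MQ), PX, Or.inl rfl, Or.inr (Or.inl rfl), ?_⟩
    intro ψ φ
    funext p
    obtain ⟨i, j⟩ := p
    rw [← Matrix.mulVec_mulVec, ← Matrix.mulVec_mulVec]
    simp only [PZZCA, PXXAT, Matrix.smul_mulVec, Matrix.add_mulVec, Matrix.one_mulVec,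
      Matrix.mulVec_add, Matrix.mulVec_smul, one_smul, kron3_tp3, kron2_tp2]
    fin_cases i <;> fin_cases j <;>
      simp [c0, tp3, tp2, ketP, PZ, PX, CNOT2, Matrix.mulVec, dotProduct,
        Fintype.sum_prod_type, Fin.sum_univ_two, Prod.ext_iff, Fin.ext_iff,
        Matrix.mul_apply, Matrix.one_apply] <;> ring
  · refine ⟨c0, hc0, PZ, (1:MQ), Or.inr (Or.inr (Or.inl rfl)), Or.inl rfl, ?_⟩
    intro ψ φ
    funext p
    obtain ⟨i, j⟩ := p
    rw [← Matrix.mulVec_mulVec, ← Matrix.mulVec_mulVec]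
    simp only [PZZCA, PXXAT, Matrix.smul_mulVec, Matrix.add_mulVec, Matrix.one_mulVec,
      Matrix.mulVec_add, Matrix.mulVec_smul, one_smul, kron3_tp3, kron2_tp2]
    fin_cases i <;> fin_cases j <;>
      simp [c0, tp3, tp2, ketP, PZ, PX, CNOT2, Matrix.mulVec, dotProduct,
        Fintype.sum_prod_type, Fin.sum_univ_two, Prod.ext_iff, Fin.ext_iff,
        Matrix.mul_apply, Matrix.one_apply] <;> ring
  · refine ⟨(-c0), (neg_ne_zero.mpr hc0), PZ, PX, Or.inr (Or.inr (Or.inl rfl)), Or.inr (Or.inl rfl), ?_⟩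
    intro ψ φ
    funext p
    obtain ⟨i, j⟩ := p
    rw [← Matrix.mulVec_mulVec, ← Matrix.mulVec_mulVec]
    simp only [PZZCA, PXXAT, Matrix.smul_mulVec, Matrix.add_mulVec, Matrix.one_mulVec,
      Matrix.mulVec_add, Matrix.mulVec_smul, one_smul, kron3_tp3, kron2_tp2]
    fin_cases i <;> fin_cases j <;>
      simp [c0, tp3, tp2, ketP, PZ, PX, CNOT2, Matrix.mulVec, dotProduct,
        Fintype.sum_prod_type, Fin.sum_univ_two, Prod.ext_iff, Fin.ext_iff,
        Matrix.mul_apply, Matrix.one_apply] <;> ring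
  · refine ⟨c0, hc0, (1:MQ), PX, Or.inl rfl, Or.inr (Or.inl rfl), ?_⟩
    intro ψ φ
    funext p
    obtain ⟨i, j⟩ := p
    rw [← Matrix.mulVec_mulVec, ← Matrix.mulVec_mulVec]
    simp only [PZZCA, PXXAT, Matrix.smul_mulVec, Matrix.add_mulVec, Matrix.one_mulVec,
      Matrix.mulVec_add, Matrix.mulVec_smul, one_smul, kron3_tp3, kron2_tp2]
    fin_cases i <;> fin_cases j <;>
      simp [c0, tp3, tp2, ketP, PZ, PX, CNOT2, Matrix.mulVec, dotProduct,
        Fintype.sum_prod_type, Fin.sum_univ_two, Prod.ext_iff, Fin.ext_iff,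
        Matrix.mul_apply, Matrix.one_apply] <;> ring
  · refine ⟨c0, hc0, (1:MQ), (1:MQ), Or.inl rfl, Or.inl rfl, ?_⟩
    intro ψ φ
    funext p
    obtain ⟨i, j⟩ := p
    rw [← Matrix.mulVec_mulVec, ← Matrix.mulVec_mulVec]
    simp only [PZZCA, PXXAT, Matrix.smul_mulVec, Matrix.add_mulVec, Matrix.one_mulVec,
      Matrix.mulVec_add, Matrix.mulVec_smul, one_smul, kron3_tp3, kron2_tp2]
    fin_cases i <;> fin_cases j <;>
      simp [c0, tp3, tp2, ketP, PZ, PX, CNOT2, Matrix.mulVec, dotProduct,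
        Fintype.sum_prod_type, Fin.sum_univ_two, Prod.ext_iff, Fin.ext_iff,
        Matrix.mul_apply, Matrix.one_apply] <;> ring
  · refine ⟨(-c0), (neg_ne_zero.mpr hc0), PZ, PX, Or.inr (Or.inr (Or.inl rfl)), Or.inr (Or.inl rfl), ?_⟩
    intro ψ φ
    funext p
    obtain ⟨i, j⟩ := p
    rw [← Matrix.mulVec_mulVec, ← Matrix.mulVec_mulVec]
    simp only [PZZCA, PXXAT, Matrix.smul_mulVec, Matrix.add_mulVec, Matrix.one_mulVec,
      Matrix.mulVec_add, Matrix.mulVec_smul, one_smul, kron3_tp3, kron2_tp2]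
    fin_cases i <;> fin_cases j <;>
      simp [c0, tp3, tp2, ketP, PZ, PX, CNOT2, Matrix.mulVec, dotProduct,
        Fintype.sum_prod_type, Fin.sum_univ_two, Prod.ext_iff, Fin.ext_iff,
        Matrix.mul_apply, Matrix.one_apply] <;> ring
  · refine ⟨c0, hc0, PZ, (1:MQ), Or.inr (Or.inr (Or.inl rfl)), Or.inl rfl, ?_⟩
    intro ψ φ
    funext p
    obtain ⟨i, j⟩ := p
    rw [← Matrix.mulVec_mulVec, ← Matrix.mulVec_mulVec]
    simp only [PZZCA, PXXAT, Matrix.smul_mulVec, Matrix.add_mulVec, Matrix.one_mulVec,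
      Matrix.mulVec_add, Matrix.mulVec_smul, one_smul, kron3_tp3, kron2_tp2]
    fin_cases i <;> fin_cases j <;>
      simp [c0, tp3, tp2, ketP, PZ, PX, CNOT2, Matrix.mulVec, dotProduct,
        Fintype.sum_prod_type, Fin.sum_univ_two, Prod.ext_iff, Fin.ext_iff,
        Matrix.mul_apply, Matrix.one_apply] <;> ring
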